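/- Let G be a finite simple graph and let G' = K₁ + G be the join of a single new vertex with G, i.e. G' is obtained from G by adding one new vertex adjacent to every vertex of G. Then χ(G') = χ(G) + 1 and r^-_χ(G') = 1 + r^-_χ(G), where r^-_χ denotes the minimum, over all proper colourings using exactly the chromatic number of colours, of the number of vertices yielding a rainbow neighbourhood. -/

import Mathlib

open SimpleGraph

/-- A vertex `v` yields a rainbow neighbourhood w.r.t. the colouring `c` if its closed
neighbourhood `N[v]` contains a vertex of every colour class. -/
def yieldsRainbow {V : Type*} {k : ℕ} (G : SimpleGraph V) (c : G.Coloring (Fin k)) (v : V) :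
    Prop :=
  ∀ i : Fin k, ∃ u : V, (u = v ∨ G.Adj v u) ∧ c u = i

/-- The number of vertices yielding a rainbow neighbourhood w.r.t. `c`. -/
noncomputable def rainbowCount {V : Type*} [Fintype V] {k : ℕ} (G : SimpleGraph V)
    (c : G.Coloring (Fin k)) : ℕ :=
  Nat.card {v : V // yieldsRainbow G c v}

/-- The minimum number of vertices yielding a rainbow neighbourhood, over all proper
colourings with exactly `k` colours. -/
noncomputable def rMin {V : Type*} [Fintype V] (G : SimpleGraph V) (k : ℕ) : ℕ :=
  sInf (Set.range fun c : G.Coloring (Fin k) => rainbowCount G c)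

/-- The maximum number of vertices yielding a rainbow neighbourhood, over all proper
colourings with exactly `k` colours. -/
noncomputable def rMax {V : Type*} [Fintype V] (G : SimpleGraph V) (k : ℕ) : ℕ :=
  sSup (Set.range fun c : G.Coloring (Fin k) => rainbowCount G c)


/-- The join `K₁ + G`: a new vertex (`none`) adjacent to every vertex of `G`. -/
def joinK1 {V : Type*} (G : SimpleGraph V) : SimpleGraph (Option V) where
  Adj x y :=
    match x, y with
    | none, none => False
    | none, some _ => True
    | some _, none => True
    | some a, some b => G.Adj a b
  symm := by
    constructor
    rintro (_ | a) (_ | b) h <;> simp_all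
    exact G.adj_symm h
  loopless := by
    constructor
    rintro (_ | a) h <;> simp_all

section RainbowHelpers

variable {V : Type*} {n k : ℕ}

lemma swap_ne_last {i x : Fin (n + 1)} (hx : x ≠ i) :
    Equiv.swap i (Fin.last n) x ≠ Fin.last n := by
  intro h
  have h2 := congrArg (Equiv.swap i (Fin.last n)) h
  rw [Equiv.swap_apply_self, Equiv.swap_apply_right] at h2
  exact hx h2

/-- Compress `Fin (n+1)` minus the point `i` into `Fin n`. -/
def squash (i x : Fin (n + 1)) (hx : x ≠ i) : Fin n :=
  (Equiv.swap i (Fin.last n) x).castPred (swap_ne_last hx)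

lemma squash_inj {i x y : Fin (n + 1)} {hx : x ≠ i} {hy : y ≠ i}
    (h : squash i x hx = squash i y hy) : x = y :=
  (Equiv.swap i (Fin.last n)).injective (Fin.castPred_inj.mp h)

lemma squash_eq_iff {i x : Fin (n + 1)} {hx : x ≠ i} {j : Fin n} :
    squash i x hx = j ↔ Equiv.swap i (Fin.last n) x = j.castSucc := by
  unfold squash
  rw [← Fin.castSucc_inj, Fin.castSucc_castPred]

lemma colorable_of_miss {W : Type*} (G : SimpleGraph W) (c : G.Coloring (Fin (n + 1)))
    (i : Fin (n + 1)) (hi : ∀ w, c w ≠ i) : G.Colorable n :=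
  ⟨SimpleGraph.Coloring.mk (fun w => squash i (c w) (hi w))
    (fun h hc => c.valid h (squash_inj hc))⟩

lemma coloring_surjective {W : Type*} (G : SimpleGraph W) (hn : ¬ G.Colorable n)
    (c : G.Coloring (Fin (n + 1))) : Function.Surjective c := by
  intro i
  by_contra h
  push_neg at h
  exact hn (colorable_of_miss G c i h)

lemma card_option_subtype {V : Type*} [Fintype V] (P : Option V → Prop) (Q : V → Prop)
    (h0 : P none) (hs : ∀ v, P (some v) ↔ Q v) :
    Nat.card {x // P x} = 1 + Nat.card {v // Q v} := by
  have e : {x // P x} ≃ Option {v // Q v} :=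
    { toFun := fun x => match x with
        | ⟨none, _⟩ => none
        | ⟨some v, hv⟩ => some ⟨v, (hs v).mp hv⟩
      invFun := fun o => match o with
        | none => ⟨none, h0⟩
        | some ⟨v, hv⟩ => ⟨some v, (hs v).mpr hv⟩
      left_inv := by rintro ⟨(_ | v), h⟩ <;> rfl
      right_inv := by rintro (_ | ⟨v, h⟩) <;> rfl }
  rw [Nat.card_congr e, Finite.card_option, Nat.add_comm]

end RainbowHelpers

section JoinHelpers

variable {V : Type*} {k : ℕ}

lemma joinK1_adj_some_none (G : SimpleGraph V) (v : V) : (joinK1 G).Adj (some v) none :=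
  trivial

lemma joinK1_adj_some_some (G : SimpleGraph V) {a b : V} :
    (joinK1 G).Adj (some a) (some b) ↔ G.Adj a b := Iff.rfl

/-- Extend a coloring of `G` to a coloring of `joinK1 G` using a fresh color for `none`. -/
def extColoring (G : SimpleGraph V) (c : G.Coloring (Fin k)) :
    (joinK1 G).Coloring (Fin (k + 1)) :=
  SimpleGraph.Coloring.mk (fun x => Option.elim x (Fin.last k) (fun v => (c v).castSucc))
    (by
      rintro (_ | a) (_ | b) hadj
      · exact hadj.elim
      · exact (Fin.castSucc_lt_last (c b)).ne'
      · exact (Fin.castSucc_lt_last (c a)).ne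
      · exact fun h => c.valid hadj (Fin.castSucc_inj.mp h))

/-- Compress a coloring of `joinK1 G` to a coloring of `G`. -/
def comColoring (G : SimpleGraph V) (c' : (joinK1 G).Coloring (Fin (k + 1))) :
    G.Coloring (Fin k) :=
  SimpleGraph.Coloring.mk
    (fun v => squash (c' none) (c' (some v)) (c'.valid (joinK1_adj_some_none G v)))
    (by
      intro v w hadj h
      exact c'.valid ((joinK1_adj_some_some G).mpr hadj) (squash_inj h))

lemma yields_none (G : SimpleGraph V) (c' : (joinK1 G).Coloring (Fin k))
    (hs : Function.Surjective c') : yieldsRainbow (joinK1 G) c' none := by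
  intro i
  obtain ⟨u, hu⟩ := hs i
  refine ⟨u, ?_, hu⟩
  cases u with
  | none => exact Or.inl rfl
  | some w => exact Or.inr trivial

lemma yields_ext (G : SimpleGraph V) (c : G.Coloring (Fin k)) (v : V) :
    yieldsRainbow (joinK1 G) (extColoring G c) (some v) ↔ yieldsRainbow G c v := by
  constructor
  · intro h i
    obtain ⟨u, hu, hcu⟩ := h i.castSucc
    cases u with
    | none => exact absurd hcu (Fin.castSucc_lt_last i).ne'
    | some w =>
      refine ⟨w, ?_, Fin.castSucc_inj.mp hcu⟩
      rcases hu with hu | hu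
      · exact Or.inl (Option.some_injective _ hu)
      · exact Or.inr hu
  · intro h i
    refine Fin.lastCases ?_ (fun j => ?_) i
    · exact ⟨none, Or.inr (joinK1_adj_some_none G v), rfl⟩
    · obtain ⟨w, hw, hcw⟩ := h j
      refine ⟨some w, ?_, ?_⟩
      · rcases hw with hw | hw
        · exact Or.inl (by rw [hw])
        · exact Or.inr hw
      · show (c w).castSucc = j.castSucc
        rw [hcw]

lemma yields_com (G : SimpleGraph V) (c' : (joinK1 G).Coloring (Fin (k + 1))) (v : V) :
    yieldsRainbow (joinK1 G) c' (some v) ↔ yieldsRainbow G (comColoring G c') v := by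
  constructor
  · intro h j
    have hswap : Equiv.swap (c' none) (Fin.last k)
        ((Equiv.swap (c' none) (Fin.last k)).symm j.castSucc) = j.castSucc :=
      Equiv.apply_symm_apply _ _
    have hia : (Equiv.swap (c' none) (Fin.last k)).symm j.castSucc ≠ c' none :=
      fun hc => (Fin.castSucc_lt_last j).ne'
        (by rw [← hswap, hc, Equiv.swap_apply_left])
    obtain ⟨u, hu, hcu⟩ := h ((Equiv.swap (c' none) (Fin.last k)).symm j.castSucc)
    cases u with
    | none => exact absurd hcu.symm hia
    | some w =>
      refine ⟨w, ?_, ?_⟩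
      · rcases hu with hu | hu
        · exact Or.inl (Option.some_injective _ hu)
        · exact Or.inr hu
      · show squash (c' none) (c' (some w)) (c'.valid (joinK1_adj_some_none G w)) = j
        rw [squash_eq_iff, hcu, hswap]
  · intro h i
    by_cases hia : i = c' none
    · exact ⟨none, Or.inr (joinK1_adj_some_none G v), hia.symm⟩
    · have hia' : i ≠ c' none := hia
      set j := (Equiv.swap (c' none) (Fin.last k) i).castPred (swap_ne_last hia') with hj
      obtain ⟨w, hw, hcw⟩ := h j
      refine ⟨some w, ?_, ?_⟩
      · rcases hw with hw | hw
        · exact Or.inl (by rw [hw])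
        · exact Or.inr hw
      · have h2 : squash (c' none) i hia' = j := rfl
        have hcw2 : squash (c' none) (c' (some w)) (c'.valid (joinK1_adj_some_none G w)) = j :=
          hcw
        exact squash_inj (hcw2.trans h2.symm)

lemma rc_ext {V : Type*} [Fintype V] (G : SimpleGraph V) (c : G.Coloring (Fin k))
    (hs : Function.Surjective c) :
    rainbowCount (joinK1 G) (extColoring G c) = 1 + rainbowCount G c := by
  refine card_option_subtype _ _ ?_ (yields_ext G c)
  apply yields_none
  intro i
  refine Fin.lastCases ?_ (fun j => ?_) i
  · exact ⟨none, rfl⟩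
  · obtain ⟨v, hv⟩ := hs j
    exact ⟨some v, by show (c v).castSucc = j.castSucc; rw [hv]⟩

lemma rc_com {V : Type*} [Fintype V] (G : SimpleGraph V)
    (c' : (joinK1 G).Coloring (Fin (k + 1))) (hs : Function.Surjective c') :
    rainbowCount (joinK1 G) c' = 1 + rainbowCount G (comColoring G c') :=
  card_option_subtype _ _ (yields_none G c' hs) (yields_com G c')

lemma surj_of_chrom {V : Type*} (G : SimpleGraph V) (k : ℕ) (hk : G.chromaticNumber = k)
    (c : G.Coloring (Fin k)) : Function.Surjective c := by
  cases k with
  | zero => exact fun i => i.elim0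
  | succ m =>
    refine coloring_surjective G ?_ c
    intro hcol
    have h2 := hcol.chromaticNumber_le
    rw [hk] at h2
    have h3 : m + 1 ≤ m := by exact_mod_cast h2
    omega

end JoinHelpers

/-- For `G' = K₁ + G` we have `χ(G') = χ(G) + 1` and
`r⁻_χ(G') = 1 + r⁻_χ(G)`. -/
theorem joinK1_chromatic_and_rMin {V : Type*} [Fintype V] (G : SimpleGraph V) (k : ℕ)
    (hk : G.chromaticNumber = k) :
    (joinK1 G).chromaticNumber = (k + 1 : ℕ) ∧ rMin (joinK1 G) (k + 1) = 1 + rMin G k := by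
  have hGk : G.Colorable k := chromaticNumber_le_iff_colorable.mp (le_of_eq hk)
  obtain ⟨c0⟩ := hGk
  have hs0 : Function.Surjective c0 := surj_of_chrom G k hk c0
  have hnot : ¬ (joinK1 G).Colorable k := by
    rintro ⟨c'⟩
    cases k with
    | zero => exact (c' none).elim0
    | succ m =>
      have hcol : G.Colorable m := ⟨comColoring G c'⟩
      have h2 := hcol.chromaticNumber_le
      rw [hk] at h2
      have h3 : m + 1 ≤ m := by exact_mod_cast h2
      omega
  have hcol1 : (joinK1 G).Colorable (k + 1) := ⟨extColoring G c0⟩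
  have hle : (joinK1 G).chromaticNumber ≤ (k + 1 : ℕ) := hcol1.chromaticNumber_le
  have hchrom : (joinK1 G).chromaticNumber = (k + 1 : ℕ) := by
    refine le_antisymm hle ?_
    have hgt : ¬ (joinK1 G).chromaticNumber ≤ (k : ℕ) :=
      fun h => hnot (chromaticNumber_le_iff_colorable.mp h)
    have h2 : ((k : ℕ∞) + 1) ≤ (joinK1 G).chromaticNumber :=
      (ENat.add_one_le_iff (by simp)).mpr (lt_of_not_ge hgt)
    exact_mod_cast h2
  refine ⟨hchrom, ?_⟩
  have hSne : (Set.range fun c : G.Coloring (Fin k) => rainbowCount G c).Nonempty :=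
    ⟨_, ⟨c0, rfl⟩⟩
  have hmem := Nat.sInf_mem hSne
  obtain ⟨c, hc⟩ := hmem
  have hc' : rainbowCount G c = rMin G k := hc
  have hcs : Function.Surjective c := surj_of_chrom G k hk c
  unfold rMin
  apply le_antisymm
  · have h1 : rainbowCount (joinK1 G) (extColoring G c)
        = 1 + sInf (Set.range fun c : G.Coloring (Fin k) => rainbowCount G c) := by
      rw [rc_ext G c hcs, hc']
      rfl
    exact Nat.sInf_le ⟨extColoring G c, h1⟩
  · refine le_csInf ⟨_, ⟨extColoring G c0, rfl⟩⟩ ?_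
    rintro x ⟨c', rfl⟩
    show 1 + sInf _ ≤ rainbowCount (joinK1 G) c'
    have hsurj : Function.Surjective c' := coloring_surjective (joinK1 G) hnot c'
    rw [rc_com G c' hsurj]
    have hge : sInf (Set.range fun c : G.Coloring (Fin k) => rainbowCount G c)
        ≤ rainbowCount G (comColoring G c') := Nat.sInf_le ⟨_, rfl⟩
    omega
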